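/- Let X be a random variable that is a finite sum of independent Bernoulli random variables. Then P(X > 0) ≥ E[X] - (E[X])²/2. -/

import Mathlib

open MeasureTheory ProbabilityTheory

theorem stmt_16 {Ω : Type*} [MeasurableSpace Ω] (μ : Measure Ω)
    [IsProbabilityMeasure μ] {ι : Type*} (S : Finset ι) (Z : ι → Ω → ℝ)
    (hmeas : ∀ i, Measurable (Z i))
    (hBer : ∀ i ∈ S, ∀ ω, Z i ω = 0 ∨ Z i ω = 1)
    (hind : iIndepFun Z μ) :
    (∫ ω, (∑ i ∈ S, Z i ω) ∂μ) - (∫ ω, (∑ i ∈ S, Z i ω) ∂μ) ^ 2 / 2 ≤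
      (μ {ω | 0 < ∑ i ∈ S, Z i ω}).toReal := by
  classical
  set X : Ω → ℝ := fun ω => ∑ i ∈ S, Z i ω with hXdef
  set p : ι → ℝ := fun i => ∫ ω, Z i ω ∂μ with hpdef
  have hZ01 : ∀ i ∈ S, ∀ ω, 0 ≤ Z i ω ∧ Z i ω ≤ 1 := by
    intro i hi ω
    rcases hBer i hi ω with h | h <;> simp [h]
  have hint : ∀ i ∈ S, Integrable (Z i) μ := by
    intro i hi
    refine (integrable_const (1 : ℝ)).mono' (hmeas i).aestronglyMeasurable
      (ae_of_all _ fun ω => ?_)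
    rcases hBer i hi ω with h | h <;> simp [h]
  have hintmul : ∀ i ∈ S, ∀ j ∈ S, Integrable (fun ω => Z i ω * Z j ω) μ := by
    intro i hi j hj
    refine (integrable_const (1 : ℝ)).mono'
      ((hmeas i).mul (hmeas j)).aestronglyMeasurable (ae_of_all _ fun ω => ?_)
    have h1 := hZ01 i hi ω; have h2 := hZ01 j hj ω
    rw [Real.norm_eq_abs, abs_of_nonneg (mul_nonneg h1.1 h2.1)]
    calc Z i ω * Z j ω ≤ 1 * 1 := mul_le_mul h1.2 h2.2 h2.1 zero_le_one
    _ = 1 := by ring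
  have hp0 : ∀ i ∈ S, 0 ≤ p i := fun i hi =>
    integral_nonneg fun ω => (hZ01 i hi ω).1
  have hXmeas : Measurable X := by
    apply Finset.measurable_sum
    intro i _
    exact hmeas i
  have hXint : Integrable X μ := integrable_finset_sum S hint
  have hEX : ∫ ω, X ω ∂μ = ∑ i ∈ S, p i := integral_finset_sum S hint
  -- nonneg integer valued
  have hXnat : ∀ ω, ∃ n : ℕ, X ω = n := by
    intro ω
    refine ⟨(S.filter fun i => Z i ω = 1).card, ?_⟩
    show ∑ i ∈ S, Z i ω = _
    rw [← Finset.sum_filter_add_sum_filter_not S (fun i => Z i ω = 1)]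
    have h1 : ∑ i ∈ S.filter (fun i => Z i ω = 1), Z i ω
        = (S.filter fun i => Z i ω = 1).card := by
      rw [Finset.sum_congr rfl (fun i hi => (Finset.mem_filter.mp hi).2)]
      simp
    have h2 : ∑ i ∈ S.filter (fun i => ¬ Z i ω = 1), Z i ω = 0 := by
      apply Finset.sum_eq_zero
      intro i hi
      rcases Finset.mem_filter.mp hi with ⟨hiS, hne⟩
      rcases hBer i hiS ω with h | h
      · exact h
      · exact absurd h hne
    rw [h1, h2, add_zero]
  -- pointwise bound
  have hpt : ∀ ω, X ω - (X ω ^ 2 - X ω) / 2 ≤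
      Set.indicator {ω | 0 < X ω} (fun _ => (1 : ℝ)) ω := by
    intro ω
    obtain ⟨n, hn⟩ := hXnat ω
    rcases Nat.eq_zero_or_pos n with h0 | h1
    · have : X ω = 0 := by rw [hn, h0]; simp
      rw [Set.indicator_apply]
      simp [this]
    · have hx1 : (1 : ℝ) ≤ X ω := by rw [hn]; exact_mod_cast h1
      have hmem : ω ∈ {ω | 0 < X ω} := by
        simp only [Set.mem_setOf_eq]; linarith
      rw [Set.indicator_of_mem hmem]
      rcases Nat.lt_or_ge n 2 with h2 | h2
      · have : n = 1 := by omega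
        rw [hn, this]; norm_num
      · have hx2 : (2 : ℝ) ≤ X ω := by rw [hn]; exact_mod_cast h2
        nlinarith
  -- second moment
  have hX2 : ∫ ω, X ω ^ 2 ∂μ = ∑ i ∈ S, ∑ j ∈ S, ∫ ω, Z i ω * Z j ω ∂μ := by
    have hexp : ∀ ω, X ω ^ 2 = ∑ i ∈ S, ∑ j ∈ S, Z i ω * Z j ω := by
      intro ω
      rw [hXdef, sq, Finset.sum_mul_sum]
    rw [integral_congr_ae (ae_of_all _ hexp),
      integral_finset_sum S (fun i hi => integrable_finset_sum S (fun j hj => hintmul i hi j hj))]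
    exact Finset.sum_congr rfl fun i hi =>
      integral_finset_sum S (fun j hj => hintmul i hi j hj)
  have hX2int : Integrable (fun ω => X ω ^ 2) μ := by
    have : (fun ω => X ω ^ 2) = fun ω => ∑ i ∈ S, ∑ j ∈ S, Z i ω * Z j ω := by
      funext ω; rw [sq, Finset.sum_mul_sum]
    rw [this]
    exact integrable_finset_sum S fun i hi =>
      integrable_finset_sum S fun j hj => hintmul i hi j hj
  -- E[X^2] ≤ E[X] + E[X]^2
  have hmom : ∫ ω, X ω ^ 2 ∂μ ≤ (∑ i ∈ S, p i) + (∑ i ∈ S, p i) ^ 2 := by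
    rw [hX2, sq, Finset.sum_mul_sum, ← Finset.sum_add_distrib]
    apply Finset.sum_le_sum
    intro i hi
    have hsplit : ∑ j ∈ S, ∫ ω, Z i ω * Z j ω ∂μ
        = (∫ ω, Z i ω * Z i ω ∂μ) + ∑ j ∈ S.erase i, ∫ ω, Z i ω * Z j ω ∂μ := by
      rw [← Finset.add_sum_erase _ _ hi]
    rw [hsplit]
    have hdiag : ∫ ω, Z i ω * Z i ω ∂μ = p i := by
      apply integral_congr_ae (ae_of_all _ fun ω => ?_)
      rcases hBer i hi ω with h | h <;> simp [h]
    have hoff : ∀ j ∈ S.erase i, ∫ ω, Z i ω * Z j ω ∂μ = p i * p j := by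
      intro j hj
      have hij : i ≠ j := (Finset.ne_of_mem_erase hj).symm
      exact IndepFun.integral_fun_mul_eq_mul_integral (hind.indepFun hij) (hint i hi).aestronglyMeasurable
        (hint j (Finset.mem_of_mem_erase hj)).aestronglyMeasurable
    rw [hdiag, Finset.sum_congr rfl hoff]
    refine add_le_add_right ?_ _
    refine Finset.sum_le_sum_of_subset_of_nonneg (Finset.erase_subset i S) fun j hj _ =>
      mul_nonneg (hp0 i hi) (hp0 j hj)
  -- indicator integral
  have hset : MeasurableSet {ω | 0 < X ω} := measurableSet_lt measurable_const hXmeas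
  have hindint : Integrable (Set.indicator {ω | 0 < X ω} (fun _ => (1 : ℝ))) μ :=
    (integrable_const (1 : ℝ)).indicator hset
  have hintLHS : Integrable (fun ω => X ω - (X ω ^ 2 - X ω) / 2) μ := by
    apply Integrable.sub hXint
    exact (hX2int.sub hXint).div_const 2
  have key : ∫ ω, (X ω - (X ω ^ 2 - X ω) / 2) ∂μ ≤ (μ {ω | 0 < X ω}).toReal := by
    calc ∫ ω, (X ω - (X ω ^ 2 - X ω) / 2) ∂μ
        ≤ ∫ ω, Set.indicator {ω | 0 < X ω} (fun _ => (1 : ℝ)) ω ∂μ :=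
          integral_mono hintLHS hindint hpt
      _ = (μ {ω | 0 < X ω}).toReal := by
          rw [integral_indicator_const _ hset]; simp [Measure.real]
  have hvalue : ∫ ω, (X ω - (X ω ^ 2 - X ω) / 2) ∂μ
      = (∑ i ∈ S, p i) - ((∫ ω, X ω ^ 2 ∂μ) - ∑ i ∈ S, p i) / 2 := by
    have h1 : ∫ ω, (X ω ^ 2 - X ω) ∂μ = (∫ ω, X ω ^ 2 ∂μ) - ∫ ω, X ω ∂μ :=
      integral_sub hX2int hXint
    have h2int : Integrable (fun ω => (X ω ^ 2 - X ω) / 2) μ := (hX2int.sub hXint).div_const 2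
    have h3 : ∫ ω, (X ω - (X ω ^ 2 - X ω) / 2) ∂μ
        = (∫ ω, X ω ∂μ) - ∫ ω, (X ω ^ 2 - X ω) / 2 ∂μ := integral_sub hXint h2int
    rw [h3, integral_div, h1, hEX]
  have hfinal : (∫ ω, X ω ∂μ) - (∫ ω, X ω ∂μ) ^ 2 / 2
      ≤ ∫ ω, (X ω - (X ω ^ 2 - X ω) / 2) ∂μ := by
    rw [hvalue, hEX]
    nlinarith [hmom]
  exact le_trans hfinal key
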